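/- arXiv:2507.18553 — 2 statements merged into one kernel-verified Lean document; each statement's English description precedes it below -/
import Mathlib

section
/- Let H = T ᵀ X ᵀ X T be positive definite with T a permutation matrix, let D be the diagonal matrix in the LDL decomposition of H, and let s ∈ ℝ^c. If z ∈ ℤ^c is produced by Babai's nearest plane algorithm applied to the basis B = 𝓧 diag(s) T (where 𝓧ᵀ𝓧 = XᵀX) and target y = 𝓧 w, then ‖X diag(s) z − X w‖² ≤ (1/4) sᵀ T^{−ᵀ} D T⁻¹ s. -/
open Matrix
open scoped RealInnerProductSpace

/-- Gram–Schmidt orthogonalization of a finite family (the unnormalized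
Gram–Schmidt vectors `ãⱼ = aⱼ − Σ_{k<j} (⟪ã_k,aⱼ⟫/‖ã_k‖²) ã_k`). -/
noncomputable def gramSchmidtFin {n c : ℕ} (a : Fin c → EuclideanSpace ℝ (Fin n)) :
    Fin c → EuclideanSpace ℝ (Fin n) :=
  letI : WellFoundedLT (Fin c) := inferInstance
  InnerProductSpace.gramSchmidt ℝ a


/-- The residual vector of Babai's nearest plane algorithm after `k` steps
(back-to-front: step `k+1` handles index `c-(k+1)`). -/
noncomputable def babaiRes {n c : ℕ} (a gs : Fin c → EuclideanSpace ℝ (Fin n))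
    (y : EuclideanSpace ℝ (Fin n)) : ℕ → EuclideanSpace ℝ (Fin n)
  | 0 => y
  | (k+1) =>
      if h : c - (k+1) < c then
        let i : Fin c := ⟨c - (k+1), h⟩
        let r := babaiRes a gs y k
        r - ((round (⟪gs i, r⟫ / ⟪gs i, a i⟫) : ℤ) : ℝ) • a i
      else babaiRes a gs y k

/-- The integer coefficients output by Babai's nearest plane algorithm. -/
noncomputable def babaiZ {n c : ℕ} (a gs : Fin c → EuclideanSpace ℝ (Fin n))
    (y : EuclideanSpace ℝ (Fin n)) (j : Fin c) : ℤ :=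
  round (⟪gs j, babaiRes a gs y (c - 1 - (j : ℕ))⟫ / ⟪gs j, a j⟫)

private lemma sum_split_tri {c : ℕ} {M : Type*} [AddCommMonoid M] (f : Fin c → M) (j : Fin c)
    (hf : ∀ i, j < i → f i = 0) :
    ∑ i, f i = f j + ∑ i ∈ Finset.Iio j, f i := by
  have h1 : ∑ i, f i = ∑ i ∈ Finset.Iic j, f i := by
    refine (Finset.sum_subset (Finset.subset_univ _) ?_).symm
    intro i _ hi
    exact hf i (by simpa using hi)
  rw [h1, ← Finset.Iio_insert, Finset.sum_insert (by simp)]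

private lemma ldl_unique {c : ℕ} (L₁ L₂ : Fin c → Fin c → ℝ) (D₁ D₂ : Fin c → ℝ)
    (t₁ : ∀ j k : Fin c, j < k → L₁ j k = 0) (t₂ : ∀ j k : Fin c, j < k → L₂ j k = 0)
    (u₁ : ∀ j, L₁ j j = 1) (u₂ : ∀ j, L₂ j j = 1)
    (hD₁ : ∀ j, D₁ j ≠ 0)
    (h : ∀ j k : Fin c, ∑ i, L₁ j i * D₁ i * L₁ k i = ∑ i, L₂ j i * D₂ i * L₂ k i) :
    ∀ i, D₁ i = D₂ i := by
  have tri : ∀ (L : Fin c → Fin c → ℝ) (D : Fin c → ℝ),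
      (∀ j k : Fin c, j < k → L j k = 0) → (∀ j, L j j = 1) → ∀ j k : Fin c,
      ∑ i, L k i * D i * L j i = L k j * D j + ∑ i ∈ Finset.Iio j, L k i * D i * L j i := by
    intro L D hL hd j k
    rw [sum_split_tri (fun i => L k i * D i * L j i) j
      (fun i hi => by simp [hL j i hi]), hd j, mul_one]
  have Q : ∀ j : Fin c, ∀ k, L₁ k j * D₁ j = L₂ k j * D₂ j := by
    intro j
    induction j using WellFoundedLT.induction with
    | _ j IH =>
      intro k
      have hD : ∀ i, i < j → D₁ i = D₂ i := by
        intro i hi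
        have := IH i hi i
        simpa [u₁, u₂] using this
      have hLe : ∀ i, i < j → ∀ k', L₂ k' i = L₁ k' i := by
        intro i hi k'
        have h1 := IH i hi k'
        rw [← hD i hi] at h1
        exact (mul_right_cancel₀ (hD₁ i) h1.symm)
      rcases lt_or_ge k j with hk | hk
      · rw [t₁ k j hk, t₂ k j hk, zero_mul, zero_mul]
      · have heq := h k j
        rw [tri L₁ D₁ t₁ u₁ j k, tri L₂ D₂ t₂ u₂ j k] at heq
        have hsums : ∑ i ∈ Finset.Iio j, L₁ k i * D₁ i * L₁ j i
            = ∑ i ∈ Finset.Iio j, L₂ k i * D₂ i * L₂ j i := by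
          refine Finset.sum_congr rfl ?_
          intro i hi
          have hi' : i < j := Finset.mem_Iio.mp hi
          rw [hLe i hi' k, hLe i hi' j, ← hD i hi']
        rw [hsums] at heq
        exact add_right_cancel heq
  intro i
  have := Q i i
  simpa [u₁, u₂] using this

private lemma mulVec_self_dot {p c : ℕ} (M : Matrix (Fin p) (Fin c) ℝ) (v : Fin c → ℝ) :
    (M *ᵥ v) ⬝ᵥ (M *ᵥ v) = v ⬝ᵥ ((Mᵀ * M) *ᵥ v) := by
  symm
  rw [← Matrix.mulVec_mulVec, Matrix.dotProduct_mulVec, Matrix.vecMul_transpose]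

/-- Theorem 4 of the paper: let `H = Tᵀ Xᵀ X T` with `T` a permutation
matrix, `D = diagonal d` the diagonal of the LDL decomposition of `H`, `s` positive
scales.  If `z` is produced by Babai's nearest plane algorithm applied to the basis
`B = 𝓧 diag(s) T` (where `𝓧ᵀ𝓧 = XᵀX`) and target `y = 𝓧 w`, then
`‖X diag(s) z − X w‖² ≤ (1/4) sᵀ T⁻ᵀ D T⁻¹ s`. -/
theorem gptq_error_bound (n m c : ℕ) (X : Matrix (Fin n) (Fin c) ℝ)
    (hX : LinearIndependent ℝ (fun j => fun i => X i j))
    (𝓧 : Matrix (Fin m) (Fin c) ℝ) (h𝓧 : 𝓧ᵀ * 𝓧 = Xᵀ * X)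
    (σ : Equiv.Perm (Fin c)) (T : Matrix (Fin c) (Fin c) ℝ)
    (hT : ∀ j k, T j k = if j = σ k then 1 else 0)
    (s : Fin c → ℝ) (hs : ∀ j, 0 < s j) (w : Fin c → ℝ)
    (𝓛 : Matrix (Fin c) (Fin c) ℝ) (d : Fin c → ℝ)
    (h𝓛 : ∀ j k : Fin c, j < k → 𝓛 j k = 0) (h𝓛d : ∀ j, 𝓛 j j = 1)
    (hLDL : Tᵀ * (Xᵀ * X) * T = 𝓛 * Matrix.diagonal d * 𝓛ᵀ)
    (b : Fin c → EuclideanSpace ℝ (Fin m))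
    (hb : ∀ j i, b j i = (𝓧 * Matrix.diagonal s * T) i j)
    (y : EuclideanSpace ℝ (Fin m)) (hy : ∀ i, y i = (𝓧 *ᵥ w) i)
    (z : Fin c → ℤ)
    (hz : ∀ j, z j = babaiZ b (gramSchmidtFin b) y (σ.symm j)) :
    ∑ i, (((X * Matrix.diagonal s) *ᵥ (fun j => (z j : ℝ)) - X *ᵥ w) i) ^ 2
      ≤ (1 / 4) * ((T⁻¹ *ᵥ s) ⬝ᵥ (Matrix.diagonal d *ᵥ (T⁻¹ *ᵥ s))) := by
  classical
  letI : WellFoundedLT (Fin c) := inferInstance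
  set gs : Fin c → EuclideanSpace ℝ (Fin m) := gramSchmidtFin b with hgs
  have hgs' : gs = InnerProductSpace.gramSchmidt ℝ b := rfl
  set zz : Fin c → ℤ := babaiZ b gs y with hzz
  have hzk : ∀ k : Fin c, z (σ k) = zz k := by
    intro k; rw [hz (σ k)]; simp [hzz, hgs]
  have hinner : ∀ (u v : EuclideanSpace ℝ (Fin m)), ⟪u, v⟫ = ∑ i, u i * v i := by
    intro u v
    simp [PiLp.inner_apply, RCLike.inner_apply, conj_trivial, mul_comm]
  have hbco : ∀ (k : Fin c) (i : Fin m), b k i = s (σ k) * 𝓧 i (σ k) := by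
    intro k i
    rw [hb, Matrix.mul_apply]
    simp only [Matrix.mul_diagonal, hT, mul_ite, mul_one, mul_zero]
    rw [Finset.sum_ite_eq' Finset.univ (σ k) (fun j => 𝓧 i j * s j)]
    simp [mul_comm]
  have hH : ∀ j k : Fin c, (Xᵀ * X) (σ j) (σ k) = ∑ i, 𝓛 j i * d i * 𝓛 k i := by
    intro j k
    have h1 : (Tᵀ * (Xᵀ * X) * T) j k = (𝓛 * Matrix.diagonal d * 𝓛ᵀ) j k := by rw [hLDL]
    have h2 : (Tᵀ * (Xᵀ * X) * T) j k = (Xᵀ * X) (σ j) (σ k) := by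
      rw [Matrix.mul_apply]
      simp only [hT, mul_ite, mul_one, mul_zero]
      rw [Finset.sum_ite_eq' Finset.univ (σ k) (fun q => (Tᵀ * (Xᵀ * X)) j q)]
      simp only [Finset.mem_univ, if_true]
      rw [Matrix.mul_apply]
      simp only [Matrix.transpose_apply, hT, ite_mul, one_mul, zero_mul]
      rw [Finset.sum_ite_eq' Finset.univ (σ j) (fun p => (Xᵀ * X) p (σ k))]
      simp
    have h3 : (𝓛 * Matrix.diagonal d * 𝓛ᵀ) j k = ∑ i, 𝓛 j i * d i * 𝓛 k i := by
      rw [Matrix.mul_apply]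
      refine Finset.sum_congr rfl ?_
      intro i _
      rw [Matrix.mul_diagonal, Matrix.transpose_apply]
    rw [← h2, h1, h3]
  have hGram : ∀ j k : Fin c, ⟪b j, b k⟫
      = ∑ i, (s (σ j) * 𝓛 j i / s (σ i)) * (d i * s (σ i) ^ 2) * (s (σ k) * 𝓛 k i / s (σ i)) := by
    intro j k
    rw [hinner]
    have e1 : ∑ i, b j i * b k i = s (σ j) * s (σ k) * ((𝓧ᵀ * 𝓧) (σ j) (σ k)) := by
      simp only [hbco]
      rw [Matrix.mul_apply, Finset.mul_sum]
      refine Finset.sum_congr rfl ?_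
      intro i _
      rw [Matrix.transpose_apply]
      ring
    rw [e1, h𝓧, hH j k, Finset.mul_sum]
    refine Finset.sum_congr rfl ?_
    intro i _
    have hsi : s (σ i) ≠ 0 := (hs (σ i)).ne'
    field_simp
  have hbli : LinearIndependent ℝ b := by
    have hXli := Fintype.linearIndependent_iff.mp hX
    rw [Fintype.linearIndependent_iff]
    intro g hg k
    set v : Fin c → ℝ := fun j => g (σ.symm j) * s j with hv
    have hXv : 𝓧 *ᵥ v = 0 := by
      funext i
      have h5 : (∑ x, g x • b x) i = ∑ x, g x * b x i := by
        simp [WithLp.ofLp_sum, Finset.sum_apply]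
      have hgi : ∑ x, g x * b x i = 0 := by
        rw [← h5, hg]; rfl
      have : (𝓧 *ᵥ v) i = ∑ x, g x * b x i := by
        simp only [Matrix.mulVec, dotProduct]
        rw [← Equiv.sum_comp σ (fun j => 𝓧 i j * v j)]
        refine Finset.sum_congr rfl ?_
        intro x _
        rw [hbco]
        simp only [hv, Equiv.symm_apply_apply]
        ring
      rw [this, hgi]
      rfl
    have h0 : (X *ᵥ v) ⬝ᵥ (X *ᵥ v) = 0 := by
      rw [mulVec_self_dot X v, ← h𝓧, ← mulVec_self_dot 𝓧 v, hXv]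
      simp
    have hXv0 : X *ᵥ v = 0 := dotProduct_self_eq_zero.mp h0
    have hv0 : ∀ j, v j = 0 := by
      apply hXli
      funext i
      have h6 : (∑ j, v j • (fun i0 => X i0 j)) i = ∑ j, v j * X i j :=
        Finset.sum_apply i Finset.univ _
      have h7 : ∑ j, v j * X i j = (X *ᵥ v) i := by
        simp [Matrix.mulVec, dotProduct, mul_comm]
      show (∑ j, v j • (fun i0 => X i0 j)) i = (0 : Fin n → ℝ) i
      rw [h6, h7, hXv0]
    have hvk : v (σ k) = 0 := hv0 (σ k)
    simp only [hv, Equiv.symm_apply_apply] at hvk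
    exact (mul_eq_zero.mp hvk).resolve_right (hs (σ k)).ne'
  have hgs0 : ∀ k, gs k ≠ 0 := by
    intro k
    rw [hgs']
    exact InnerProductSpace.gramSchmidt_ne_zero k hbli
  set N : Fin c → ℝ := fun k => ⟪gs k, gs k⟫ with hNdef
  have hN : ∀ k, 0 < N k := by
    intro k
    have : N k = ‖gs k‖ ^ 2 := real_inner_self_eq_norm_sq (gs k)
    rw [this]
    exact pow_pos (norm_pos_iff.mpr (hgs0 k)) 2
  have horth : ∀ j k : Fin c, j ≠ k → ⟪gs j, gs k⟫ = 0 := by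
    intro j k hjk
    rw [hgs']
    exact InnerProductSpace.gramSchmidt_orthogonal ℝ b hjk
  set μ : Fin c → Fin c → ℝ :=
    fun j i => if i = j then 1 else if i < j then ⟪gs i, b j⟫ / N i else 0 with hμdef
  have hμtri : ∀ j i : Fin c, j < i → μ j i = 0 := by
    intro j i hji
    simp only [hμdef]
    rw [if_neg (by omega), if_neg (by omega)]
  have hμdiag : ∀ j, μ j j = 1 := by intro j; simp [hμdef]
  have hexp : ∀ j, b j = ∑ i, μ j i • gs i := by
    intro j
    rw [sum_split_tri (fun i => μ j i • gs i) j
      (fun i hi => by simp [hμtri j i hi])]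
    rw [hμdiag, one_smul]
    rw [hgs', InnerProductSpace.gramSchmidt_def'' ℝ b j]
    congr 1
    refine Finset.sum_congr rfl ?_
    intro i hi
    have hij : i < j := Finset.mem_Iio.mp hi
    have hNi : N i = ‖gs i‖ ^ 2 := real_inner_self_eq_norm_sq (gs i)
    simp only [hμdef]
    rw [if_neg (by omega), if_pos hij, hNi]
    norm_num [hgs']
  have hgram2 : ∀ j k : Fin c, ⟪b j, b k⟫ = ∑ i, μ j i * N i * μ k i := by
    intro j k
    rw [hexp j, hexp k, inner_sum]
    refine Finset.sum_congr rfl ?_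
    intro l _
    rw [sum_inner, Finset.sum_eq_single l]
    · rw [real_inner_smul_left, real_inner_smul_right]
      ring
    · intro i _ hil
      rw [real_inner_smul_left, real_inner_smul_right, horth i l hil]
      ring
    · intro h; exact absurd (Finset.mem_univ l) h
  have hND : ∀ i, N i = d i * s (σ i) ^ 2 := by
    refine ldl_unique μ (fun j i => s (σ j) * 𝓛 j i / s (σ i)) N (fun i => d i * s (σ i) ^ 2)
      hμtri ?_ hμdiag ?_ (fun j => (hN j).ne') ?_
    · intro j k hjk
      show s (σ j) * 𝓛 j k / s (σ k) = 0
      rw [h𝓛 j k hjk]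
      simp
    · intro j
      show s (σ j) * 𝓛 j j / s (σ j) = 1
      rw [h𝓛d j, mul_one]
      exact div_self (hs (σ j)).ne'
    · intro j k
      rw [← hgram2 j k]
      exact hGram j k
  have hinnerbb : ∀ k, ⟪gs k, b k⟫ = N k := by
    intro k
    rw [hexp k, inner_sum, Finset.sum_eq_single k]
    · rw [real_inner_smul_right, hμdiag, one_mul]
    · intro i _ hik
      rw [real_inner_smul_right, horth k i (Ne.symm hik)]
      ring
    · intro h; exact absurd (Finset.mem_univ k) h
  -- Babai recursion
  have hstep : ∀ (k : ℕ) (j : Fin c), (j : ℕ) = c - (k + 1) → k + 1 ≤ c →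
      babaiRes b gs y (k + 1) = babaiRes b gs y k - ((zz j : ℤ) : ℝ) • b j := by
    intro k j hj hk
    have hlt : c - (k + 1) < c := by omega
    have hje : (⟨c - (k + 1), hlt⟩ : Fin c) = j := Fin.ext (by simp [hj])
    have hjk : c - 1 - (j : ℕ) = k := by omega
    show babaiRes b gs y (k + 1) = _
    rw [babaiRes, dif_pos hlt]
    simp only [hje]
    have hzze : (zz j : ℤ) = round (⟪gs j, babaiRes b gs y k⟫ / ⟪gs j, b j⟫) := by
      rw [hzz]
      show babaiZ b gs y j = _
      rw [babaiZ, hjk]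
    rw [hzze]
  have hsum : ∀ k, k ≤ c → babaiRes b gs y k
      = y - ∑ j ∈ Finset.univ.filter (fun j : Fin c => c - k ≤ (j : ℕ)), ((zz j : ℤ) : ℝ) • b j := by
    intro k
    induction k with
    | zero =>
      intro _
      have he : Finset.univ.filter (fun j : Fin c => c - 0 ≤ (j : ℕ)) = ∅ := by
        ext i
        have hi := i.isLt
        simp only [Finset.mem_filter, Finset.mem_univ, true_and, Finset.notMem_empty, iff_false]
        omega
      rw [he, Finset.sum_empty, sub_zero]
      rfl
    | succ k ih =>
      intro hk
      have hlt : c - (k + 1) < c := by omega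
      set j : Fin c := ⟨c - (k + 1), hlt⟩ with hjdef
      have hjv : (j : ℕ) = c - (k + 1) := rfl
      rw [hstep k j hjv hk, ih (by omega)]
      have hset : Finset.univ.filter (fun i : Fin c => c - (k + 1) ≤ (i : ℕ))
          = insert j (Finset.univ.filter (fun i : Fin c => c - k ≤ (i : ℕ))) := by
        ext i
        have hi := i.isLt
        simp only [Finset.mem_filter, Finset.mem_univ, true_and, Finset.mem_insert,
          Fin.ext_iff, hjv]
        omega
      have hnm : j ∉ Finset.univ.filter (fun i : Fin c => c - k ≤ (i : ℕ)) := by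
        simp only [Finset.mem_filter, Finset.mem_univ, true_and, hjv]
        omega
      rw [hset, Finset.sum_insert hnm]
      abel
  have hres : babaiRes b gs y c = y - ∑ j, ((zz j : ℤ) : ℝ) • b j := by
    rw [hsum c le_rfl]
    congr 1
    apply Finset.sum_congr ?_ (fun _ _ => rfl)
    ext i
    simp
  have hfrac : ∀ j : Fin c, |⟪gs j, babaiRes b gs y c⟫| ≤ N j / 2 := by
    intro j
    have hjc : (j : ℕ) < c := j.isLt
    have hA : ∀ k, c - (j : ℕ) ≤ k → k ≤ c →
        ⟪gs j, babaiRes b gs y k⟫ = ⟪gs j, babaiRes b gs y (c - (j : ℕ))⟫ := by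
      intro k
      induction k with
      | zero =>
        intro h1 _
        have : c - (j : ℕ) = 0 := by omega
        rw [this]
      | succ k ih =>
        intro h1 h2
        rcases Nat.eq_or_lt_of_le h1 with he | hlt'
        · rw [← he]
        · have h1' : c - (j : ℕ) ≤ k := by omega
          have hltc : c - (k + 1) < c := by omega
          set i : Fin c := ⟨c - (k + 1), hltc⟩ with hidef
          have hiv : (i : ℕ) = c - (k + 1) := rfl
          have hij : i < j := by
            rw [Fin.lt_def, hiv]
            omega
          rw [hstep k i hiv h2, inner_sub_right, real_inner_smul_right]
          have hz0 : ⟪gs j, b i⟫ = 0 := by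
            rw [hgs']
            exact InnerProductSpace.gramSchmidt_inv_triangular ℝ b hij
          rw [hz0, mul_zero, sub_zero]
          exact ih h1' (by omega)
    have hB : ⟪gs j, babaiRes b gs y c⟫ = ⟪gs j, babaiRes b gs y (c - (j : ℕ))⟫ :=
      hA c (Nat.sub_le c j) le_rfl
    have hCeq : c - (j : ℕ) = (c - 1 - (j : ℕ)) + 1 := by omega
    have hC : babaiRes b gs y (c - (j : ℕ))
        = babaiRes b gs y (c - 1 - (j : ℕ)) - ((zz j : ℤ) : ℝ) • b j := by
      rw [hCeq]
      exact hstep (c - 1 - (j : ℕ)) j (by omega) (by omega)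
    rw [hB, hC, inner_sub_right, real_inner_smul_right, hinnerbb j]
    set x : ℝ := ⟪gs j, babaiRes b gs y (c - 1 - (j : ℕ))⟫ with hxdef
    have hzze : (zz j : ℤ) = round (x / N j) := by
      rw [hzz]
      show babaiZ b gs y j = _
      rw [babaiZ, hinnerbb j]
    rw [hzze]
    have hNj := hN j
    have h1 : x - (round (x / N j) : ℝ) * N j = (x / N j - round (x / N j)) * N j := by
      rw [sub_mul, div_mul_cancel₀ _ hNj.ne']
    rw [h1, abs_mul, abs_of_pos hNj]
    have h2 := abs_sub_round (x / N j)
    nlinarith [abs_nonneg (x / N j - (round (x / N j) : ℝ))]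
  have hyexp : y = ∑ k, (w (σ k) / s (σ k)) • b k := by
    ext i
    rw [hy i]
    have : (∑ k, (w (σ k) / s (σ k)) • b k) i = ∑ k, (w (σ k) / s (σ k)) * b k i := by
      simp [WithLp.ofLp_sum, Finset.sum_apply]
    rw [this, Matrix.mulVec, dotProduct]
    rw [← Equiv.sum_comp σ (fun j => 𝓧 i j * w j)]
    refine (Finset.sum_congr rfl ?_).symm
    intro k _
    rw [hbco]
    have hsk : s (σ k) ≠ 0 := (hs (σ k)).ne'
    field_simp
  set r : EuclideanSpace ℝ (Fin m) := babaiRes b gs y c with hrdef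
  set γ : Fin c → ℝ := fun k => w (σ k) / s (σ k) - ((zz k : ℤ) : ℝ) with hγdef
  have hrγ : r = ∑ k, γ k • b k := by
    rw [hres, hyexp, ← Finset.sum_sub_distrib]
    refine Finset.sum_congr rfl ?_
    intro k _
    rw [hγdef]
    exact (sub_smul _ _ (b k)).symm
  set α : Fin c → ℝ := fun i => ∑ k, γ k * μ k i with hαdef
  have hrα : r = ∑ i, α i • gs i := by
    rw [hrγ]
    have e1 : ∀ k : Fin c, γ k • b k = ∑ i, (γ k * μ k i) • gs i := by
      intro k
      rw [hexp k, Finset.smul_sum]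
      refine Finset.sum_congr rfl ?_
      intro i _
      rw [smul_smul]
    calc ∑ k, γ k • b k = ∑ k, ∑ i, (γ k * μ k i) • gs i := Finset.sum_congr rfl fun k _ => e1 k
      _ = ∑ i, ∑ k, (γ k * μ k i) • gs i := Finset.sum_comm
      _ = ∑ i, α i • gs i := by
          refine Finset.sum_congr rfl ?_
          intro i _
          rw [hαdef, ← Finset.sum_smul]
  have hinner_r : ∀ i, ⟪gs i, r⟫ = α i * N i := by
    intro i
    rw [hrα, inner_sum, Finset.sum_eq_single i]
    · rw [real_inner_smul_right]
    · intro l _ hli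
      rw [real_inner_smul_right, horth i l (Ne.symm hli), mul_zero]
    · intro h; exact absurd (Finset.mem_univ i) h
  have hnorm_r : ⟪r, r⟫ = ∑ i, α i ^ 2 * N i := by
    rw [hrα, inner_sum]
    refine Finset.sum_congr rfl ?_
    intro l _
    rw [sum_inner, Finset.sum_eq_single l]
    · rw [real_inner_smul_left, real_inner_smul_right]
      ring
    · intro i _ hil
      rw [real_inner_smul_left, real_inner_smul_right, horth i l hil]
      ring
    · intro h; exact absurd (Finset.mem_univ l) h
  have hbound : ⟪r, r⟫ ≤ ∑ i, d i * s (σ i) ^ 2 / 4 := by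
    rw [hnorm_r]
    refine Finset.sum_le_sum ?_
    intro i _
    rw [← hND i]
    have hf := hfrac i
    rw [hinner_r i] at hf
    have hNi := hN i
    have h2 : (α i * N i) ^ 2 ≤ (N i / 2) ^ 2 := by
      calc (α i * N i) ^ 2 = |α i * N i| ^ 2 := (sq_abs _).symm
        _ ≤ (N i / 2) ^ 2 := by
            apply pow_le_pow_left₀ (abs_nonneg _) hf
    nlinarith
  have hrco : ∀ i, r i = y i - ∑ k, ((zz k : ℤ) : ℝ) * b k i := by
    intro i
    have h5 : (∑ k, ((zz k : ℤ) : ℝ) • b k) i = ∑ k, ((zz k : ℤ) : ℝ) * b k i := by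
      simp [WithLp.ofLp_sum, Finset.sum_apply]
    calc r i = y i - (∑ k, ((zz k : ℤ) : ℝ) • b k) i := by rw [hres]; rfl
      _ = y i - ∑ k, ((zz k : ℤ) : ℝ) * b k i := by rw [h5]
  have hLHS : ∑ i, (((X * Matrix.diagonal s) *ᵥ (fun j => (z j : ℝ)) - X *ᵥ w) i) ^ 2 = ⟪r, r⟫ := by
    set v : Fin c → ℝ := fun j => s j * (z j : ℝ) - w j with hvdef
    have e0 : (X * Matrix.diagonal s) *ᵥ (fun j => (z j : ℝ)) = X *ᵥ (fun j => s j * (z j : ℝ)) := by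
      rw [← Matrix.mulVec_mulVec]
      have hdg : (Matrix.diagonal s *ᵥ fun j => ((z j : ℤ) : ℝ)) = fun j => s j * (z j : ℝ) := by
        funext j
        exact Matrix.mulVec_diagonal s (fun j => (z j : ℝ)) j
      rw [hdg]
    have hXv : ((X * Matrix.diagonal s) *ᵥ (fun j => (z j : ℝ)) - X *ᵥ w) = X *ᵥ v := by
      have harg : ((fun j => s j * ((z j : ℤ) : ℝ)) - w) = v := by
        funext j
        simp [hvdef]
      rw [e0, ← Matrix.mulVec_sub, harg]
    have h𝓧vi : ∀ i, (𝓧 *ᵥ v) i = -(r i) := by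
      intro i
      have e2 : ∑ k, ((zz k : ℤ) : ℝ) * b k i = ∑ j, 𝓧 i j * (s j * (z j : ℝ)) := by
        rw [← Equiv.sum_comp σ (fun j => 𝓧 i j * (s j * (z j : ℝ)))]
        refine Finset.sum_congr rfl ?_
        intro k _
        rw [hbco, ← hzk k]
        push_cast
        ring
      have e3 : (𝓧 *ᵥ v) i = (∑ k, ((zz k : ℤ) : ℝ) * b k i) - (𝓧 *ᵥ w) i := by
        simp only [Matrix.mulVec, dotProduct]
        rw [e2, ← Finset.sum_sub_distrib]
        refine Finset.sum_congr rfl ?_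
        intro j _
        simp only [hvdef]
        ring
      rw [e3, hrco i, hy i]
      ring
    calc ∑ i, (((X * Matrix.diagonal s) *ᵥ (fun j => (z j : ℝ)) - X *ᵥ w) i) ^ 2
        = ∑ i, ((X *ᵥ v) i) ^ 2 := by rw [hXv]
      _ = (X *ᵥ v) ⬝ᵥ (X *ᵥ v) := by simp [dotProduct, sq]
      _ = v ⬝ᵥ ((Xᵀ * X) *ᵥ v) := mulVec_self_dot X v
      _ = (𝓧 *ᵥ v) ⬝ᵥ (𝓧 *ᵥ v) := by rw [← h𝓧, ← mulVec_self_dot 𝓧 v]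
      _ = ∑ i, ((𝓧 *ᵥ v) i) ^ 2 := by simp [dotProduct, sq]
      _ = ∑ i, (r i) ^ 2 := by
          refine Finset.sum_congr rfl ?_
          intro i _
          rw [h𝓧vi i]
          ring
      _ = ⟪r, r⟫ := by
          rw [hinner]
          refine Finset.sum_congr rfl ?_
          intro i _
          ring
  have hRHS : (1 / 4) * ((T⁻¹ *ᵥ s) ⬝ᵥ (Matrix.diagonal d *ᵥ (T⁻¹ *ᵥ s)))
      = ∑ i, d i * s (σ i) ^ 2 / 4 := by
    have hTinv : T⁻¹ = Tᵀ := by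
      apply Matrix.inv_eq_right_inv
      ext j l
      rw [Matrix.mul_apply, Matrix.one_apply]
      simp only [Matrix.transpose_apply, hT]
      rw [← Equiv.sum_comp σ.symm
        (fun p => (if j = σ p then (1 : ℝ) else 0) * (if l = σ p then 1 else 0))]
      simp only [Equiv.apply_symm_apply]
      have hterm : ∀ p : Fin c, (if j = p then (1 : ℝ) else 0) * (if l = p then 1 else 0)
          = if p = j then (if l = p then (1 : ℝ) else 0) else 0 := by
        intro p
        by_cases h1 : j = p <;> simp [h1, eq_comm]
      rw [Finset.sum_congr rfl (fun p _ => hterm p),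
        Finset.sum_ite_eq' Finset.univ j (fun p => if l = p then (1 : ℝ) else 0)]
      simp [eq_comm]
    have hTs : ∀ k, (T⁻¹ *ᵥ s) k = s (σ k) := by
      intro k
      rw [hTinv]
      simp only [Matrix.mulVec, dotProduct, Matrix.transpose_apply, hT, ite_mul,
        one_mul, zero_mul]
      rw [Finset.sum_ite_eq' Finset.univ (σ k) s]
      simp
    simp only [dotProduct, Matrix.mulVec_diagonal, hTs]
    rw [Finset.mul_sum]
    refine Finset.sum_congr rfl ?_
    intro k _
    ring
  rw [hLHS, hRHS]
  exact hbound
end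

section
/- Let a₁,…,a_c be linearly independent with Gram–Schmidt vectors ã₁,…,ã_c, and suppose for each j the residual component satisfies |⟨residual, ãⱼ⟩|/‖ãⱼ‖ ≤ ‖ãⱼ‖/2. Then the residual lies in the hyper-cuboid {Σⱼ tⱼ ãⱼ/‖ãⱼ‖ : |tⱼ| ≤ ‖ãⱼ‖/2}, and distinct targets in the interiors of translates of this cuboid by distinct lattice points are rounded by Babai's algorithm to those distinct lattice points; i.e., the Babai rounding regions tile ℝ^span(A) by translates of the cuboid. -/
open Matrix
open scoped RealInnerProductSpace

lemma gsFin_inner_self {n c : ℕ} (a : Fin c → EuclideanSpace ℝ (Fin n)) (j : Fin c) :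
    ⟪gramSchmidtFin a j, a j⟫ = ‖gramSchmidtFin a j‖ ^ 2 := by
  haveI : WellFoundedLT (Fin c) := inferInstance
  show ⟪InnerProductSpace.gramSchmidt ℝ a j, a j⟫ = ‖InnerProductSpace.gramSchmidt ℝ a j‖ ^ 2
  conv_lhs => rw [InnerProductSpace.gramSchmidt_def'' ℝ a j]
  rw [inner_add_right, inner_sum, real_inner_self_eq_norm_sq]
  rw [Finset.sum_eq_zero, add_zero]
  intro i hi
  rw [real_inner_smul_right, InnerProductSpace.gramSchmidt_orthogonal ℝ a (Finset.mem_Iio.1 hi).ne', mul_zero]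

lemma gsFin_orth {n c : ℕ} (a : Fin c → EuclideanSpace ℝ (Fin n)) {i j : Fin c} (h : i ≠ j) :
    ⟪gramSchmidtFin a i, gramSchmidtFin a j⟫ = 0 := by
  haveI : WellFoundedLT (Fin c) := inferInstance
  exact InnerProductSpace.gramSchmidt_orthogonal ℝ a h

lemma gsFin_inner_a_zero {n c : ℕ} (a : Fin c → EuclideanSpace ℝ (Fin n)) {i j : Fin c}
    (h : i < j) : ⟪gramSchmidtFin a j, a i⟫ = 0 := by
  haveI : WellFoundedLT (Fin c) := inferInstance
  exact InnerProductSpace.gramSchmidt_inv_triangular ℝ a h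

lemma gsFin_ne_zero {n c : ℕ} {a : Fin c → EuclideanSpace ℝ (Fin n)}
    (ha : LinearIndependent ℝ a) (j : Fin c) : gramSchmidtFin a j ≠ 0 := by
  haveI : WellFoundedLT (Fin c) := inferInstance
  exact InnerProductSpace.gramSchmidt_ne_zero j ha

lemma gsFin_span {n c : ℕ} (a : Fin c → EuclideanSpace ℝ (Fin n)) :
    Submodule.span ℝ (Set.range (gramSchmidtFin a)) = Submodule.span ℝ (Set.range a) := by
  haveI : WellFoundedLT (Fin c) := inferInstance
  exact InnerProductSpace.span_gramSchmidt ℝ a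

lemma babaiRes_eq {n c : ℕ} (a gs : Fin c → EuclideanSpace ℝ (Fin n))
    (y : EuclideanSpace ℝ (Fin n)) {k : ℕ} (hk : k ≤ c) :
    babaiRes a gs y k = y - ∑ j ∈ Finset.univ.filter (fun j : Fin c => c - k ≤ (j : ℕ)),
      (babaiZ a gs y j : ℝ) • a j := by
  induction k with
  | zero =>
      have he : Finset.univ.filter (fun j : Fin c => c ≤ (j : ℕ)) = ∅ := by
        ext j
        simp only [Finset.mem_filter, Finset.mem_univ, true_and, Finset.notMem_empty, iff_false]
        have := j.isLt; omega
      simp [babaiRes, he]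
  | succ k ih =>
      have hk' : k ≤ c := le_of_lt hk
      have h : c - (k+1) < c := by omega
      set i : Fin c := ⟨c - (k+1), h⟩ with hi
      have step : babaiRes a gs y (k+1) = babaiRes a gs y k -
          ((round (⟪gs i, babaiRes a gs y k⟫ / ⟪gs i, a i⟫) : ℤ) : ℝ) • a i := by
        rw [babaiRes, dif_pos h]
      have hiv : (i : ℕ) = c - (k+1) := rfl
      have hz : round (⟪gs i, babaiRes a gs y k⟫ / ⟪gs i, a i⟫) = babaiZ a gs y i := by
        unfold babaiZ
        rw [show c - 1 - (i : ℕ) = k by omega]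
      have hfil : (Finset.univ.filter (fun j : Fin c => c - (k+1) ≤ (j : ℕ)))
          = insert i (Finset.univ.filter (fun j : Fin c => c - k ≤ (j : ℕ))) := by
        ext j
        simp only [Finset.mem_filter, Finset.mem_univ, true_and, Finset.mem_insert, Fin.ext_iff,
          hiv]
        have := j.isLt; omega
      have hnm : i ∉ Finset.univ.filter (fun j : Fin c => c - k ≤ (j : ℕ)) := by
        simp only [Finset.mem_filter, Finset.mem_univ, true_and, hiv]
        omega
      rw [step, hz, ih hk', hfil, Finset.sum_insert hnm]
      abel

lemma babaiZ_exact {n c : ℕ} {a : Fin c → EuclideanSpace ℝ (Fin n)}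
    (ha : LinearIndependent ℝ a) (z : Fin c → ℤ) (t : Fin c → ℝ)
    (ht : ∀ j, |t j| < ‖gramSchmidtFin a j‖ / 2) (y : EuclideanSpace ℝ (Fin n))
    (hy : y = (∑ j, (z j : ℝ) • a j) + ∑ j, (t j / ‖gramSchmidtFin a j‖) • gramSchmidtFin a j) :
    babaiZ a (gramSchmidtFin a) y = z := by
  set g := gramSchmidtFin a with hg
  have main : ∀ m : ℕ, ∀ j : Fin c, c - (j : ℕ) = m → babaiZ a g y j = z j := by
    intro m
    induction m using Nat.strong_induction_on with
    | _ m ih =>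
      intro j hj
      have hjc := j.isLt
      have IH : ∀ i : Fin c, (j : ℕ) < (i : ℕ) → babaiZ a g y i = z i := by
        intro i hi
        exact ih (c - (i : ℕ)) (by have := i.isLt; omega) i rfl
      have hkc : c - 1 - (j : ℕ) ≤ c := by omega
      have hres := babaiRes_eq a g y hkc
      have hfil : (Finset.univ.filter (fun i : Fin c => c - (c - 1 - (j:ℕ)) ≤ (i : ℕ)))
          = Finset.univ.filter (fun i : Fin c => (j:ℕ) < (i : ℕ)) := by
        ext i
        simp only [Finset.mem_filter, Finset.mem_univ, true_and]
        have := i.isLt; omega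
      rw [hfil] at hres
      have hgj : ‖g j‖ ≠ 0 := norm_ne_zero_iff.2 (gsFin_ne_zero ha j)
      have hS2 : ∑ i, ⟪g j, (t i / ‖g i‖) • g i⟫ = t j * ‖g j‖ := by
        rw [Finset.sum_eq_single j]
        · rw [real_inner_smul_right, real_inner_self_eq_norm_sq]
          field_simp
        · intro i _ hne
          rw [real_inner_smul_right, gsFin_orth a (Ne.symm hne), mul_zero]
        · simp
      have hS3 : ∑ i ∈ Finset.univ.filter (fun i : Fin c => (j:ℕ) < (i : ℕ)),
          ⟪g j, ((babaiZ a g y i : ℝ)) • a i⟫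
          = ∑ i ∈ Finset.univ.filter (fun i : Fin c => (j:ℕ) < (i : ℕ)),
          ⟪g j, ((z i : ℝ)) • a i⟫ := by
        refine Finset.sum_congr rfl fun i hi => ?_
        rw [IH i (Finset.mem_filter.1 hi).2]
      have hS1 : ∑ i, ⟪g j, ((z i : ℝ)) • a i⟫
          - ∑ i ∈ Finset.univ.filter (fun i : Fin c => (j:ℕ) < (i : ℕ)),
            ⟪g j, ((z i : ℝ)) • a i⟫
          = (z j : ℝ) * ‖g j‖ ^ 2 := by
        rw [← Finset.sum_filter_add_sum_filter_not Finset.univ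
          (fun i : Fin c => (j:ℕ) < (i : ℕ)) (fun i => ⟪g j, ((z i : ℝ)) • a i⟫)]
        rw [add_sub_cancel_left]
        rw [Finset.sum_eq_single_of_mem j (by simp)]
        · rw [real_inner_smul_right, gsFin_inner_self]
        · intro i hi hne
          have hilt : i < j := by
            have := (Finset.mem_filter.1 hi).2
            simp only [not_lt] at this
            exact lt_of_le_of_ne (by exact_mod_cast this) hne
          rw [real_inner_smul_right, gsFin_inner_a_zero a hilt, mul_zero]
      have hyin : ⟪g j, y⟫ = (∑ i, ⟪g j, ((z i : ℝ)) • a i⟫) + t j * ‖g j‖ := by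
        rw [hy, inner_add_right, inner_sum, inner_sum, hS2]
      have hx : ⟪g j, babaiRes a g y (c - 1 - (j:ℕ))⟫
          = (z j : ℝ) * ‖g j‖ ^ 2 + t j * ‖g j‖ := by
        rw [hres, inner_sub_right, inner_sum, hyin, hS3, add_sub_right_comm, hS1]
      show round (⟪g j, babaiRes a g y (c - 1 - (j:ℕ))⟫ / ⟪g j, a j⟫) = z j
      rw [hx, gsFin_inner_self]
      have hq : ((z j : ℝ) * ‖g j‖ ^ 2 + t j * ‖g j‖) / ‖g j‖ ^ 2
          = (z j : ℝ) + t j / ‖g j‖ := by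
        field_simp
      have hpos : 0 < ‖g j‖ := lt_of_le_of_ne (norm_nonneg _) (Ne.symm hgj)
      have habs : |t j / ‖g j‖| < 1/2 := by
        rw [abs_div, abs_of_pos hpos, div_lt_iff₀ hpos]
        linarith [ht j]
      have h0 : round (t j / ‖g j‖) = 0 := by
        rw [round_eq_zero_iff]
        obtain ⟨h1, h2⟩ := abs_lt.1 habs
        exact ⟨by linarith, by linarith⟩
      rw [hq, round_intCast_add, h0, add_zero]
  funext j
  exact main (c - (j:ℕ)) j rfl

lemma gsFin_expand {n c : ℕ} {a : Fin c → EuclideanSpace ℝ (Fin n)}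
    (ha : LinearIndependent ℝ a) {v : EuclideanSpace ℝ (Fin n)}
    (hv : v ∈ Submodule.span ℝ (Set.range a)) :
    v = ∑ j, (⟪gramSchmidtFin a j, v⟫ / ‖gramSchmidtFin a j‖ ^ 2) • gramSchmidtFin a j := by
  set g := gramSchmidtFin a with hg
  set w := v - ∑ j, (⟪g j, v⟫ / ‖g j‖ ^ 2) • g j with hw
  have hwperp : ∀ j, ⟪g j, w⟫ = 0 := by
    intro j
    have hgj : ‖g j‖ ≠ 0 := norm_ne_zero_iff.2 (gsFin_ne_zero ha j)
    rw [hw, inner_sub_right, inner_sum]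
    rw [Finset.sum_eq_single j]
    · rw [real_inner_smul_right, real_inner_self_eq_norm_sq]
      field_simp
      ring
    · intro i _ hne
      rw [real_inner_smul_right, gsFin_orth a (Ne.symm hne), mul_zero]
    · simp
  have hsum : (∑ j, (⟪g j, v⟫ / ‖g j‖ ^ 2) • g j) ∈ Submodule.span ℝ (Set.range a) := by
    rw [← gsFin_span a]
    exact Submodule.sum_mem _ fun j _ =>
      Submodule.smul_mem _ _ (Submodule.subset_span ⟨j, rfl⟩)
  have hwspan : w ∈ Submodule.span ℝ (Set.range g) := by
    rw [hg, gsFin_span]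
    exact Submodule.sub_mem _ hv hsum
  have key : ∀ u ∈ Submodule.span ℝ (Set.range g), ⟪u, w⟫ = 0 := by
    intro u hu
    induction hu using Submodule.span_induction with
    | mem x hx => obtain ⟨j, rfl⟩ := hx; exact hwperp j
    | zero => simp
    | add x y _ _ hx hy => rw [inner_add_left, hx, hy, add_zero]
    | smul r x _ hx => rw [real_inner_smul_left, hx, mul_zero]
  have hw0 : w = 0 := inner_self_eq_zero.1 (key w hwspan)
  exact sub_eq_zero.1 hw0


/-- (i) for any target `y ∈ span(A)`, Babai's residual `y − A z` lies in
the hyper-cuboid `{Σⱼ tⱼ gsⱼ/‖gsⱼ‖ : |tⱼ| ≤ ‖gsⱼ‖/2}`; (ii) any target in the interior of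
the translate of this cuboid by a lattice point `A z` is rounded by Babai's algorithm
to exactly that lattice point, so the rounding regions tile `span(A)` by translates of
the cuboid. -/
theorem babai_regions_tile {n c : ℕ} (a : Fin c → EuclideanSpace ℝ (Fin n))
    (ha : LinearIndependent ℝ a)
    (gs : Fin c → EuclideanSpace ℝ (Fin n)) (hgs : gs = gramSchmidtFin a) :
    (∀ y ∈ Submodule.span ℝ (Set.range a), ∃ t : Fin c → ℝ,
        (∀ j, |t j| ≤ ‖gs j‖ / 2) ∧
        y - ∑ j, (babaiZ a gs y j : ℝ) • a j = ∑ j, (t j / ‖gs j‖) • gs j) ∧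
    (∀ (z : Fin c → ℤ) (y : EuclideanSpace ℝ (Fin n)) (t : Fin c → ℝ),
        (∀ j, |t j| < ‖gs j‖ / 2) →
        y = (∑ j, (z j : ℝ) • a j) + ∑ j, (t j / ‖gs j‖) • gs j →
        babaiZ a gs y = z) := by
  subst hgs
  set g := gramSchmidtFin a with hg
  constructor
  · intro y hy
    set r := y - ∑ j, (babaiZ a g y j : ℝ) • a j with hrdef
    have hrspan : r ∈ Submodule.span ℝ (Set.range a) := by
      exact Submodule.sub_mem _ hy (Submodule.sum_mem _ fun j _ =>
        Submodule.smul_mem _ _ (Submodule.subset_span ⟨j, rfl⟩))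
    refine ⟨fun j => ⟪g j, r⟫ / ‖g j‖, ?_, ?_⟩
    · intro j
      have hjc := j.isLt
      have hgj : ‖g j‖ ≠ 0 := norm_ne_zero_iff.2 (gsFin_ne_zero ha j)
      have hgpos : 0 < ‖g j‖ := lt_of_le_of_ne (norm_nonneg _) (Ne.symm hgj)
      have hkc : c - 1 - (j : ℕ) ≤ c := by omega
      have hres := babaiRes_eq a g y hkc
      have hfil : (Finset.univ.filter (fun i : Fin c => c - (c - 1 - (j:ℕ)) ≤ (i : ℕ)))
          = Finset.univ.filter (fun i : Fin c => (j:ℕ) < (i : ℕ)) := by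
        ext i
        simp only [Finset.mem_filter, Finset.mem_univ, true_and]
        have := i.isLt; omega
      rw [hfil] at hres
      have hsplit := Finset.sum_filter_add_sum_filter_not Finset.univ
        (fun i : Fin c => (j:ℕ) < (i:ℕ)) (fun i => (babaiZ a g y i : ℝ) • a i)
      have hr2 : r = babaiRes a g y (c - 1 - (j:ℕ)) -
          ∑ i ∈ Finset.univ.filter (fun i : Fin c => ¬ (j:ℕ) < (i:ℕ)),
            (babaiZ a g y i : ℝ) • a i := by
        rw [hres, hrdef, ← hsplit]
        abel
      set x := ⟪g j, babaiRes a g y (c - 1 - (j:ℕ))⟫ with hx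
      have hinner : ⟪g j, r⟫ = x - (babaiZ a g y j : ℝ) * ‖g j‖ ^ 2 := by
        rw [hr2, inner_sub_right, inner_sum]
        congr 1
        rw [Finset.sum_eq_single_of_mem j (by simp)]
        · rw [real_inner_smul_right, gsFin_inner_self]
        · intro i hi hne
          have hilt : i < j := by
            have := (Finset.mem_filter.1 hi).2
            simp only [not_lt] at this
            exact lt_of_le_of_ne (by exact_mod_cast this) hne
          rw [real_inner_smul_right, gsFin_inner_a_zero a hilt, mul_zero]
      have hZdef : babaiZ a g y j = round (x / ‖g j‖ ^ 2) := by
        show round (⟪g j, babaiRes a g y (c - 1 - (j:ℕ))⟫ / ⟪g j, a j⟫) = _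
        rw [gsFin_inner_self]
      have hfac : x - (round (x / ‖g j‖ ^ 2) : ℝ) * ‖g j‖ ^ 2
          = (x / ‖g j‖ ^ 2 - (round (x / ‖g j‖ ^ 2) : ℝ)) * ‖g j‖ ^ 2 := by
        field_simp
      have hb : |⟪g j, r⟫| ≤ ‖g j‖ ^ 2 / 2 := by
        rw [hinner, hZdef, hfac, abs_mul, abs_of_pos (by positivity : (0:ℝ) < ‖g j‖ ^ 2)]
        have := abs_sub_round (x / ‖g j‖ ^ 2)
        nlinarith [sq_nonneg (‖g j‖)]
      rw [abs_div, abs_of_pos hgpos, div_le_iff₀ hgpos]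
      nlinarith
    · have hexp := gsFin_expand ha hrspan
      rw [← hg] at hexp
      calc r = ∑ j, (⟪g j, r⟫ / ‖g j‖ ^ 2) • g j := hexp
        _ = ∑ j, ((⟪g j, r⟫ / ‖g j‖) / ‖g j‖) • g j := by
              refine Finset.sum_congr rfl fun j _ => ?_
              rw [div_div, ← sq]
  · intro z y t ht hy
    exact babaiZ_exact ha z t ht y hy
end
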